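/- arXiv:2312.03529 — 3 statements merged into one kernel-verified Lean document; each statement's English description precedes it below -/
import Mathlib

section
/- Let f : X → Y be an open and closed continuous surjection, X submetrizable, and y a non-isolated point of Y such that every hereditarily closure-preserving collection of neighbourhoods of y is finite. Then for every coarser metrizable topology σ on X, the σ-closure of f⁻¹(y) is a compact subset of (X, σ). -/
universe u v

def Submetrizable (X : Type u) [t : TopologicalSpace X] : Prop :=
  ∃ σ : TopologicalSpace X, t ≤ σ ∧ @TopologicalSpace.MetrizableSpace X σ

def HCP {Y : Type v} [TopologicalSpace Y] (𝔉 : Set (Set Y)) : Prop :=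
  ∀ G ⊆ 𝔉, ∀ B : Set Y → Set Y, (∀ F ∈ G, B F ⊆ F) →
    closure (⋃ F ∈ G, B F) = ⋃ F ∈ G, closure (B F)

open Filter Set Metric Topology

section Aux

/-- Around an injective sequence without accumulation points in a metric space one can find
a discrete family of open balls. -/
lemma aux_balls {Z : Type*} [MetricSpace Z] (w : ℕ → Z) (hw : Function.Injective w)
    (hacc : ∀ p : Z, ¬ AccPt p (𝓟 (Set.range w))) :
    ∃ U : ℕ → Set Z, (∀ n, IsOpen (U n)) ∧ (∀ n, w n ∈ U n) ∧
      ∀ z : Z, ∃ V, IsOpen V ∧ z ∈ V ∧ {n | (U n ∩ V).Nonempty}.Subsingleton := by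
  set D : Set Z := Set.range w with hD
  have hDne : D.Nonempty := ⟨w 0, ⟨0, rfl⟩⟩
  have hclosure : ∀ p : Z, p ∈ closure D → p ∈ D := by
    intro p hp
    by_contra hpD
    refine hacc p ?_
    rw [accPt_principal_iff_clusterPt, Set.diff_singleton_eq_self hpD]
    exact mem_closure_iff_clusterPt.1 hp
  have hne : ∀ n, (D \ {w n}).Nonempty := fun n =>
    ⟨w (n + 1), ⟨n + 1, rfl⟩, by simp [hw.ne (Nat.succ_ne_self n)]⟩
  have hnotin : ∀ n, w n ∉ closure (D \ {w n}) := by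
    intro n hmem
    refine hacc (w n) ?_
    rw [accPt_principal_iff_clusterPt]
    exact mem_closure_iff_clusterPt.1 hmem
  set ρ : ℕ → ℝ := fun n => infDist (w n) (D \ {w n}) with hρ
  have hρpos : ∀ n, 0 < ρ n := by
    intro n
    rcases lt_or_eq_of_le (infDist_nonneg (s := D \ {w n}) (x := w n)) with h | h
    · exact h
    · exact absurd ((mem_closure_iff_infDist_zero (hne n)).2 h.symm) (hnotin n)
  have hρle : ∀ m n, m ≠ n → ρ n ≤ dist (w n) (w m) := by
    intro m n hmn
    exact infDist_le_dist_of_mem ⟨⟨m, rfl⟩, by simp [hw.ne hmn]⟩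
  refine ⟨fun n => ball (w n) (ρ n / 3), fun n => isOpen_ball,
    fun n => mem_ball_self (by linarith [hρpos n]), fun z => ?_⟩
  by_cases hz : z ∈ D
  · obtain ⟨m, rfl⟩ := hz
    refine ⟨ball (w m) (ρ m / 3), isOpen_ball, mem_ball_self (by linarith [hρpos m]), ?_⟩
    have key : ∀ n, (ball (w n) (ρ n / 3) ∩ ball (w m) (ρ m / 3)).Nonempty → n = m := by
      intro n ⟨v, hv1, hv2⟩
      by_contra hnm
      have h1 : dist (w n) (w m) ≤ dist (w n) v + dist v (w m) := dist_triangle _ _ _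
      rw [mem_ball] at hv1 hv2
      have h2 : ρ n ≤ dist (w n) (w m) := hρle m n (fun h => hnm h.symm)
      have h3 : ρ m ≤ dist (w m) (w n) := hρle n m hnm
      rw [dist_comm v (w n)] at hv1
      rw [dist_comm (w m) (w n)] at h3
      nlinarith [dist_nonneg (x := w n) (y := w m)]
    exact fun a ha b hb => (key a ha).trans (key b hb).symm
  · have hδpos : 0 < infDist z D := by
      rcases lt_or_eq_of_le (infDist_nonneg (s := D) (x := z)) with h | h
      · exact h
      · exact absurd (hclosure z ((mem_closure_iff_infDist_zero hDne).2 h.symm)) hz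
    set δ := infDist z D with hδ
    refine ⟨ball z (δ / 4), isOpen_ball, mem_ball_self (by linarith), ?_⟩
    intro a ⟨v, hva, hvz⟩ b ⟨u, hub, huz⟩
    by_contra hab
    rw [mem_ball] at hva hvz hub huz
    have hda : δ ≤ dist z (w a) := infDist_le_dist_of_mem ⟨a, rfl⟩
    have hdb : δ ≤ dist z (w b) := infDist_le_dist_of_mem ⟨b, rfl⟩
    have hra : ρ a ≤ dist (w a) (w b) := hρle b a (fun h => hab h.symm)
    have hrb : ρ b ≤ dist (w b) (w a) := hρle a b hab
    have t1 : dist z (w a) ≤ dist z v + dist v (w a) := dist_triangle _ _ _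
    have t2 : dist z (w b) ≤ dist z u + dist u (w b) := dist_triangle _ _ _
    have t3 : dist (w a) (w b) ≤ dist (w a) v + dist v z + dist z u + dist u (w b) := by
      calc dist (w a) (w b) ≤ dist (w a) z + dist z (w b) := dist_triangle _ _ _
        _ ≤ (dist (w a) v + dist v z) + (dist z u + dist u (w b)) :=
            add_le_add (dist_triangle _ _ _) (dist_triangle _ _ _)
        _ = _ := by ring
    rw [dist_comm z v] at t1
    rw [dist_comm z u] at t2
    rw [dist_comm (w b) (w a)] at hrb
    rw [dist_comm (w a) v, dist_comm z u] at t3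
    nlinarith

/-- In a metric space, if the closure of `A` is not compact, then there is an injective
sequence in `A` together with a "discrete" family of open sets around its terms. -/
lemma aux_metric {Z : Type*} [MetricSpace Z] (A : Set Z) (h : ¬ IsCompact (closure A)) :
    ∃ (x : ℕ → Z) (U : ℕ → Set Z), (∀ n, x n ∈ A) ∧ (∀ n, IsOpen (U n)) ∧ (∀ n, x n ∈ U n) ∧
      ∀ z : Z, ∃ V, IsOpen V ∧ z ∈ V ∧ {n | (U n ∩ V).Nonempty}.Subsingleton := by
  classical
  -- Step 1: a sequence in `closure A` with no cluster point
  have h1 : ¬ IsSeqCompact (closure A) := fun hs => h hs.isCompact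
  rw [IsSeqCompact] at h1
  push_neg at h1
  obtain ⟨z, hz, hnc⟩ := h1
  have hzc : ∀ p : Z, ¬ MapClusterPt p atTop z := by
    intro p hp
    obtain ⟨ψ, hψ, hψt⟩ := TopologicalSpace.FirstCountableTopology.tendsto_subseq hp
    have hpA : p ∈ closure A :=
      isClosed_closure.mem_of_tendsto hψt (Eventually.of_forall fun n => hz _)
    exact hnc p hpA ψ hψ hψt
  -- Step 2: a sequence in `A` with no cluster point
  have hA : ∀ n : ℕ, ∃ b ∈ A, dist (z n) b < 1 / (n + 1) := by
    intro n
    exact Metric.mem_closure_iff.1 (hz n) _ (by positivity)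
  choose x hxA hxd using hA
  have hxc : ∀ p : Z, ¬ MapClusterPt p atTop x := by
    intro p hp
    obtain ⟨ψ, hψ, hψt⟩ := TopologicalSpace.FirstCountableTopology.tendsto_subseq hp
    have hd0 : Tendsto (fun n => dist (x (ψ n)) (z (ψ n))) atTop (𝓝 0) := by
      have hb : ∀ n : ℕ, dist (x (ψ n)) (z (ψ n)) ≤ 1 / (n + 1) := by
        intro n
        rw [dist_comm]
        refine (hxd (ψ n)).le.trans ?_
        have h2 : n ≤ ψ n := hψ.le_apply
        gcongr
      exact squeeze_zero (fun n => dist_nonneg) hb tendsto_one_div_add_atTop_nhds_zero_nat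
    have hzt : Tendsto (z ∘ ψ) atTop (𝓝 p) := hψt.congr_dist hd0
    have h3 : ClusterPt p (map (z ∘ ψ) atTop) := ClusterPt.of_le_nhds hzt
    have h4 : map (z ∘ ψ) atTop ≤ map z atTop := by
      rw [← Filter.map_map]
      exact map_mono (hψ.tendsto_atTop)
    exact hzc p (h3.mono h4)
  -- Step 3: the range of `x` is infinite and has no accumulation points
  have hinf : (Set.range x).Infinite := by
    intro hfin
    haveI : Finite (Set.range x) := hfin
    obtain ⟨v, hv⟩ := Finite.exists_infinite_fiber (Set.rangeFactorization x)
    have hfreq : ∃ᶠ n in atTop, x n = (v : Z) := by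
      rw [Nat.frequently_atTop_iff_infinite]
      have : {n : ℕ | Set.rangeFactorization x n = v}.Infinite := by
        rw [← Set.infinite_coe_iff]; exact hv
      refine this.mono fun n hn => ?_
      simpa [Set.rangeFactorization, Subtype.ext_iff] using hn
    refine hxc v (mapClusterPt_iff_frequently.2 fun s hs => ?_)
    exact hfreq.mono fun n hn => hn ▸ mem_of_mem_nhds hs
  have hxacc : ∀ p : Z, ¬ AccPt p (𝓟 (Set.range x)) := by
    intro p hp
    refine hxc p (mapClusterPt_iff_frequently.2 fun s hs => ?_)
    rw [Filter.frequently_atTop]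
    intro N
    have hfin : (Set.image x (Set.Iio N) \ {p}).Finite :=
      ((Set.finite_Iio N).image x).diff
    have hV : s \ (Set.image x (Set.Iio N) \ {p}) ∈ 𝓝 p := by
      refine Filter.diff_mem hs ?_
      exact hfin.isClosed.isOpen_compl.mem_nhds (by simp)
    obtain ⟨q, ⟨hq1, hq2⟩, hq3⟩ := (accPt_iff_nhds (x := p)).1 hp _ hV
    obtain ⟨n, rfl⟩ := hq2
    refine ⟨n, ?_, hq1.1⟩
    by_contra hn
    push_neg at hn
    exact hq1.2 ⟨Set.mem_image_of_mem x (Set.mem_Iio.2 hn), hq3⟩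
  -- Step 4: an injective sequence in `A` with no accumulation points
  set e : ℕ ↪ Set.range x := hinf.natEmbedding
  set w : ℕ → Z := fun n => (e n : Z) with hwdef
  have hwinj : Function.Injective w := fun a b hab => e.injective (Subtype.ext hab)
  have hwA : ∀ n, w n ∈ A := by
    intro n
    obtain ⟨m, hm⟩ := (e n).2
    have : w n = x m := hm.symm
    rw [this]
    exact hxA m
  have hwacc : ∀ p : Z, ¬ AccPt p (𝓟 (Set.range w)) := by
    intro p hp
    refine hxacc p (hp.mono (principal_mono.2 ?_))
    rintro _ ⟨n, rfl⟩
    exact (e n).2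
  obtain ⟨U, hUo, hUm, hUd⟩ := aux_balls w hwinj hwacc
  exact ⟨w, U, hwA, hUo, hUm, hUd⟩

lemma combinatorial {X Y : Type*} [TopologicalSpace X] [TopologicalSpace Y] [T1Space Y]
    (f : X → Y) (hf : Continuous f) (hopen : IsOpenMap f) (hclosed : IsClosedMap f)
    (y : Y) (hy : (nhdsWithin y {y}ᶜ).NeBot)
    (hHCP : ∀ 𝔉 : Set (Set Y), HCP 𝔉 → (∀ F ∈ 𝔉, F ∈ nhds y) → 𝔉.Finite)
    (x : ℕ → X) (hx : ∀ n, f (x n) = y)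
    (U : ℕ → Set X) (hUo : ∀ n, IsOpen (U n)) (hxU : ∀ n, x n ∈ U n)
    (hdisc : ∀ z : X, ∃ V, IsOpen V ∧ z ∈ V ∧ {n | (U n ∩ V).Nonempty}.Subsingleton) :
    False := by
  classical
  -- f '' (U n) is an open neighbourhood of y
  have hyU : ∀ n, f '' (U n) ∈ 𝓝 y := fun n =>
    (hopen _ (hUo n)).mem_nhds ⟨x n, hxU n, hx n⟩
  -- pick a sequence of pairs (index, point)
  have hstep : ∀ s : Finset (ℕ × Y), (∀ a ∈ s, a.2 ∈ f '' (U a.1) ∧ a.2 ≠ y) →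
      ∃ b : ℕ × Y, (b.2 ∈ f '' (U b.1) ∧ b.2 ≠ y) ∧ ∀ a ∈ s, a.1 < b.1 ∧ a.2 ≠ b.2 := by
    intro s _
    set n₀ : ℕ := (s.sup fun a => a.1) + 1 with hn₀
    have hW : f '' (U n₀) \ ((s.image fun a => a.2 : Finset Y) \ {y} : Set Y) ∈ 𝓝 y := by
      refine Filter.diff_mem (hyU n₀) ?_
      refine IsOpen.mem_nhds ?_ (by simp)
      refine (Set.Finite.isClosed ?_).isOpen_compl
      exact ((s.image fun a => a.2).finite_toSet).diff
    have hW' : (f '' (U n₀) \ (((s.image fun a => a.2 : Finset Y) : Set Y) \ {y})) ∩ {y}ᶜ ∈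
        nhdsWithin y {y}ᶜ :=
      Filter.inter_mem (mem_nhdsWithin_of_mem_nhds hW) self_mem_nhdsWithin
    obtain ⟨v, ⟨hv1, hv2⟩, hv3⟩ := hy.nonempty_of_mem hW'
    refine ⟨(n₀, v), ⟨hv1, hv3⟩, fun a ha => ⟨?_, fun h => ?_⟩⟩
    · exact Nat.lt_succ_of_le (Finset.le_sup (f := fun a => a.1) ha)
    · refine hv2 ⟨?_, hv3⟩
      simp only [Finset.coe_image, Set.mem_image, Finset.mem_coe]
      exact ⟨a, ha, h⟩
  obtain ⟨g, hgP, hgr⟩ := exists_seq_of_forall_finset_exists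
      (fun a : ℕ × Y => a.2 ∈ f '' (U a.1) ∧ a.2 ≠ y)
      (fun a b => a.1 < b.1 ∧ a.2 ≠ b.2) hstep
  -- unpack
  set ν : ℕ → ℕ := fun k => (g k).1 with hν
  set w : ℕ → Y := fun k => (g k).2 with hwdef
  have hνmono : StrictMono ν := strictMono_nat_of_lt_succ fun k => (hgr k (k+1) (Nat.lt_succ_self k)).1
  have hwim : ∀ k, w k ∈ f '' (U (ν k)) := fun k => (hgP k).1
  have hwny : ∀ k, w k ≠ y := fun k => (hgP k).2
  have hwne : ∀ k m, k < m → w k ≠ w m := fun k m h => (hgr k m h).2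
  -- the distinguished neighbourhoods
  set G : ℕ → Set Y := fun k => f '' (U (ν k)) \ (w '' Set.Iio k) with hG
  have hGnhds : ∀ k, G k ∈ 𝓝 y := by
    intro k
    refine Filter.diff_mem (hyU (ν k)) (IsOpen.mem_nhds ?_ ?_)
    · exact (Set.Finite.isClosed ((Set.finite_Iio k).image w)).isOpen_compl
    · rintro ⟨j, _, hj⟩
      exact hwny j hj
  have hGmem : ∀ k, w k ∈ G k := by
    intro k
    refine ⟨hwim k, ?_⟩
    rintro ⟨j, hj, hje⟩
    exact hwne j k hj hje
  have hGnot : ∀ k m, k < m → w k ∉ G m := fun k m h hmem => hmem.2 ⟨k, h, rfl⟩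
  have hGinj : Function.Injective G := by
    intro k m hkm
    rcases lt_trichotomy k m with h | h | h
    · exact absurd (hkm ▸ hGmem k) (hGnot k m h)
    · exact h
    · exact absurd (hkm ▸ hGmem m) (hGnot m k h)
  -- the family of distinguished neighbourhoods is HCP
  have hHCPG : HCP (Set.range G) := by
    intro 𝒢 h𝒢 B hB
    have hidx : ∀ F, F ∈ 𝒢 → ∃ k, G k = F := fun F hF => h𝒢 hF
    choose! idx hGidx using hidx
    set A : Set Y → Set X := fun F => U (ν (idx F)) ∩ f ⁻¹' (B F) with hA
    have key1 : ∀ F ∈ 𝒢, f '' A F = B F := by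
      intro F hF
      apply Set.Subset.antisymm
      · rintro _ ⟨u, ⟨_, hu2⟩, rfl⟩
        exact hu2
      · intro b hb
        have hbF : b ∈ f '' (U (ν (idx F))) := ((hGidx F hF) ▸ hB F hF hb).1
        obtain ⟨u, hu, rfl⟩ := hbF
        exact ⟨u, ⟨hu, hb⟩, rfl⟩
    have hLF : LocallyFinite fun F : ↥𝒢 => A F.1 := by
      intro z
      obtain ⟨V, hVo, hVz, hVsub⟩ := hdisc z
      refine ⟨V, hVo.mem_nhds hVz, Set.Subsingleton.finite ?_⟩
      rintro F₁ ⟨u₁, hu₁, hv₁⟩ F₂ ⟨u₂, hu₂, hv₂⟩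
      have h1 : (U (ν (idx F₁.1)) ∩ V).Nonempty := ⟨u₁, hu₁.1, hv₁⟩
      have h2 : (U (ν (idx F₂.1)) ∩ V).Nonempty := ⟨u₂, hu₂.1, hv₂⟩
      have := hνmono.injective (hVsub h1 h2)
      have hF12 : F₁.1 = F₂.1 := by
        rw [← hGidx F₁.1 F₁.2, ← hGidx F₂.1 F₂.2, this]
      exact Subtype.ext hF12
    apply Set.Subset.antisymm
    · have himg : ⋃ F ∈ 𝒢, B F = f '' (⋃ F : ↥𝒢, A F.1) := by
        rw [Set.image_iUnion, Set.biUnion_eq_iUnion]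
        exact Set.iUnion_congr fun F => (key1 F.1 F.2).symm
      calc closure (⋃ F ∈ 𝒢, B F) ⊆ f '' closure (⋃ F : ↥𝒢, A F.1) := by
              rw [himg]
              exact closure_minimal (Set.image_mono subset_closure)
                (hclosed _ isClosed_closure)
        _ = ⋃ F : ↥𝒢, f '' closure (A F.1) := by rw [hLF.closure_iUnion, Set.image_iUnion]
        _ ⊆ ⋃ F : ↥𝒢, closure (f '' A F.1) :=
              Set.iUnion_mono fun F => image_closure_subset_closure_image hf
        _ = ⋃ F ∈ 𝒢, closure (B F) := by
              rw [Set.biUnion_eq_iUnion]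
              exact Set.iUnion_congr fun F => by rw [key1 F.1 F.2]
    · exact Set.iUnion₂_subset fun F hF =>
        closure_mono (Set.subset_biUnion_of_mem hF)
  have hfin := hHCP (Set.range G) hHCPG (by rintro F ⟨k, rfl⟩; exact hGnhds k)
  exact (Set.infinite_range_of_injective hGinj) hfin

end Aux

/-- Let `f : X → Y` be an open-closed continuous surjection, `X` submetrizable, and `y` a
non-isolated point of `Y` such that every HCP collection of neighbourhoods of `y` is finite.
Then the closure of the fiber `f⁻¹(y)` in every coarser metrizable topology `σ` on `X` is
compact in `(X, σ)`. -/
theorem closure_fiber_isCompact {X : Type u} {Y : Type v}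
    [tX : TopologicalSpace X] [TopologicalSpace Y] [T1Space X] [T1Space Y]
    (hX : Submetrizable X)
    (f : X → Y) (hf : Continuous f) (hsurj : Function.Surjective f)
    (hopen : IsOpenMap f) (hclosed : IsClosedMap f)
    (y : Y) (hy : (nhdsWithin y {y}ᶜ).NeBot)
    (hHCP : ∀ 𝔉 : Set (Set Y), HCP 𝔉 → (∀ F ∈ 𝔉, F ∈ nhds y) → 𝔉.Finite) :
    ∀ σ : TopologicalSpace X, tX ≤ σ → @TopologicalSpace.MetrizableSpace X σ →
      @IsCompact X σ (@closure X σ (f ⁻¹' {y})) := by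
  intro σ hσ hmet
  by_contra hcon
  obtain ⟨m, hm⟩ : ∃ m : MetricSpace X, m.toUniformSpace.toTopologicalSpace = σ :=
    ⟨@TopologicalSpace.metrizableSpaceMetric X σ hmet, rfl⟩
  subst hm
  obtain ⟨x, U, hxA, hUo, hxU, hdisc⟩ := @aux_metric X m (f ⁻¹' {y}) hcon
  refine combinatorial f hf hopen hclosed y hy hHCP x (fun n => hxA n) U
    (fun n => (hUo n).mono hσ) hxU (fun z => ?_)
  obtain ⟨V, hVo, hVz, hVs⟩ := hdisc z
  exact ⟨V, hVo.mono hσ, hVz, hVs⟩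
end

section
/- Let X be submetrizable, Y functionally Hausdorff and dense-in-itself such that every y ∈ Y lies in a subspace Q(y) ⊆ Y in which y is a non-isolated q-point, and let f : X → Y be an open-closed continuous surjection. Then Y is submetrizable. -/
open Set Filter Metric Topology

universe u v

def FunctionallyHausdorff (Y : Type v) [TopologicalSpace Y] : Prop :=
  ∀ a b : Y, a ≠ b → ∃ g : Y → ℝ, Continuous g ∧ (∀ z, g z ∈ Set.Icc (0:ℝ) 1) ∧
    g a = 0 ∧ g b = 1

/-- `y` is a q-point of the space it lives in. -/
def IsQPoint {Z : Type v} [TopologicalSpace Z] (z : Z) : Prop :=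
  ∃ U : ℕ → Set Z, (∀ i, IsOpen (U i) ∧ z ∈ U i) ∧
    ∀ x : ℕ → Z, (∀ i, x i ∈ U i) → Function.Injective x →
      ∃ p : Z, p ∈ closure (Set.range x \ {p})

universe w

namespace SubmetrizableAux

/-- System of distinct representatives from a sequence of infinite sets. -/
lemma exists_injective_selection {α : Type*} (E : ℕ → Set α) (hE : ∀ k, (E k).Infinite) :
    ∃ v : ℕ → α, (∀ k, v k ∈ E k) ∧ Function.Injective v := by
  classical
  have hpick : ∀ (n : ℕ) (s : List α), ((E n) \ {x | x ∈ s}).Nonempty :=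
    fun n s => ((hE n).diff s.finite_toSet).nonempty
  let l : ℕ → List α := fun n => Nat.rec [] (fun k prev => prev ++ [(hpick k prev).some]) n
  let v : ℕ → α := fun n => (hpick n (l n)).some
  have hl : ∀ n, l (n + 1) = l n ++ [v n] := fun n => rfl
  have hmem : ∀ n, v n ∈ E n \ {x | x ∈ l n} := fun n => (hpick n (l n)).some_mem
  have hmono : ∀ m n, m ≤ n → ∀ a, a ∈ l m → a ∈ l n := by
    intro m n hmn
    induction n with
    | zero => intro a ha; rw [Nat.le_zero.mp hmn] at ha; exact ha
    | succ k ih =>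
      rcases Nat.lt_or_ge m (k + 1) with h | h
      · intro a ha
        rw [hl k]
        exact List.mem_append.mpr (Or.inl (ih (Nat.lt_succ_iff.mp h) a ha))
      · have hmk : m = k + 1 := le_antisymm hmn h
        subst hmk; exact fun a ha => ha
  have hvl : ∀ m n, m < n → v m ∈ l n := by
    intro m n h
    apply hmono (m + 1) n h
    rw [hl m]
    exact List.mem_append.mpr (Or.inr (List.mem_singleton.mpr rfl))
  refine ⟨v, fun k => (hmem k).1, ?_⟩
  intro m n hmn
  by_contra hne
  rcases Nat.lt_trichotomy m n with h | h | h
  · exact (hmem n).2 (by rw [← hmn] at *; exact hvl m n h)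
  · exact hne h
  · exact (hmem m).2 (by rw [hmn] at *; exact hvl n m h)

/-- Choice of a strictly monotone sequence satisfying cofinal predicates. -/
lemma exists_strictMono_choice {P : ℕ → ℕ → Prop} (h : ∀ i N, ∃ k, N ≤ k ∧ P i k) :
    ∃ k : ℕ → ℕ, StrictMono k ∧ ∀ i, P i (k i) := by
  classical
  let k : ℕ → ℕ := fun i => Nat.rec (h 0 0).choose (fun i prev => (h (i + 1) (prev + 1)).choose) i
  have hk0 : P 0 (k 0) := (h 0 0).choose_spec.2
  have hks : ∀ i, k i < k (i + 1) ∧ P (i + 1) (k (i + 1)) := by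
    intro i
    have hrec : k (i + 1) = (h (i + 1) (k i + 1)).choose := rfl
    rw [hrec]
    exact ⟨Nat.lt_of_succ_le (h (i + 1) (k i + 1)).choose_spec.1,
      (h (i + 1) (k i + 1)).choose_spec.2⟩
  refine ⟨k, strictMono_nat_of_lt_succ fun n => (hks n).1, ?_⟩
  intro i
  cases i with
  | zero => exact hk0
  | succ n => exact (hks n).2

/-- The trace on `QS` of any open neighbourhood of a point `y` that is non-isolated in `QS`
is infinite. -/
lemma trace_infinite {Y : Type v} [TopologicalSpace Y] [T1Space Y] {QS : Set Y} {y : Y}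
    (hy : y ∈ QS) (hne : (nhdsWithin (⟨y, hy⟩ : QS) ({(⟨y, hy⟩ : QS)}ᶜ)).NeBot)
    {G : Set Y} (hG : IsOpen G) (hyG : y ∈ G) : ((G ∩ QS) \ {y}).Infinite := by
  intro hfin
  have hclosed : IsClosed ((G ∩ QS) \ {y}) := hfin.isClosed
  have hG'open : IsOpen (G \ ((G ∩ QS) \ {y})) := hG.sdiff hclosed
  have hyG' : y ∈ G \ ((G ∩ QS) \ {y}) := ⟨hyG, fun h => h.2 rfl⟩
  have hmem : (Subtype.val ⁻¹' (G \ ((G ∩ QS) \ {y})) : Set QS) ∈ nhds (⟨y, hy⟩ : QS) :=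
    (hG'open.preimage continuous_subtype_val).mem_nhds hyG'
  have h2 : ((Subtype.val ⁻¹' (G \ ((G ∩ QS) \ {y})) : Set QS) ∩ {(⟨y, hy⟩ : QS)}ᶜ).Nonempty :=
    Filter.nonempty_of_mem
      (Filter.inter_mem (mem_nhdsWithin_of_mem_nhds hmem) self_mem_nhdsWithin)
  obtain ⟨q, hq1, hq2⟩ := h2
  have hqy : (q : Y) ≠ y := fun h => hq2 (by apply Subtype.ext; exact h)
  exact hq1.2 ⟨⟨hq1.1, q.2⟩, hqy⟩


lemma clControl_discrete {X : Type u} {M : Type w} [TopologicalSpace X] [MetricSpace M]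
    {g : X → M} (hg : Continuous g) (hginj : Function.Injective g)
    (c : ℕ → M) (hcinj : Function.Injective c)
    (hacc : ∀ wp : M, wp ∉ closure (Set.range c \ {wp}))
    (r : ℕ → ℝ)
    (hr3 : ∀ k m, k ≠ m → r k * 3 ≤ dist (c k) (c m))
    (x' : ℕ → X) (hx' : ∀ k, dist (g (x' k)) (c k) < r k)
    (I : Set ℕ) :
    ∀ z ∈ closure (x' '' I), z ∈ x' '' I := by
  intro z hz
  by_contra hzI
  have hgz : g z ∉ (fun k => g (x' k)) '' I := by
    rintro ⟨k, hkI, hk⟩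
    exact hzI ⟨k, hkI, hginj hk⟩
  have hzc : g z ∈ closure ((fun k => g (x' k)) '' I) := by
    have h2 := (image_closure_subset_closure_image hg) ⟨z, hz, rfl⟩
    rwa [Set.image_image] at h2
  apply hacc (g z)
  rw [Metric.mem_closure_iff]
  intro ε hε
  have hε4 : 0 < ε / 4 := by linarith
  have hzc' := hzc
  rw [Metric.mem_closure_iff] at hzc'
  obtain ⟨b₁, hb₁, hd₁⟩ := hzc' (ε / 4) hε4
  have hzc2 : g z ∈ closure (((fun k => g (x' k)) '' I) \ {b₁}) := by
    have hsub : (fun k => g (x' k)) '' I ⊆ (((fun k => g (x' k)) '' I) \ {b₁}) ∪ {b₁} := by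
      intro b hb
      by_cases hb1 : b = b₁
      · exact Or.inr (by simp [hb1])
      · exact Or.inl ⟨hb, hb1⟩
    have h3 := closure_mono hsub hzc
    rw [closure_union, closure_singleton] at h3
    rcases h3 with h3 | h3
    · exact h3
    · rw [Set.mem_singleton_iff] at h3
      exact absurd (h3 ▸ hb₁) hgz
  rw [Metric.mem_closure_iff] at hzc2
  obtain ⟨b₂, hb₂mem, hd₂⟩ := hzc2 (ε / 4) hε4
  obtain ⟨hb₂, hb₂ne⟩ := hb₂mem
  obtain ⟨k₁, hk₁I, hk₁⟩ := hb₁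
  obtain ⟨k₂, hk₂I, hk₂⟩ := hb₂
  have hkne : k₁ ≠ k₂ := by
    rintro rfl
    apply hb₂ne
    rw [Set.mem_singleton_iff, ← hk₁, ← hk₂]
  have e1 : dist (g (x' k₁)) (c k₁) < r k₁ := hx' k₁
  have e2 : dist (g (x' k₂)) (c k₂) < r k₂ := hx' k₂
  have e3 : dist (g z) (g (x' k₁)) < ε / 4 := by
    rw [show g (x' k₁) = b₁ from hk₁]; exact hd₁
  have e4 : dist (g z) (g (x' k₂)) < ε / 4 := by
    rw [show g (x' k₂) = b₂ from hk₂]; exact hd₂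
  have e5 : r k₁ * 3 ≤ dist (c k₁) (c k₂) := hr3 k₁ k₂ hkne
  have e6 : r k₂ * 3 ≤ dist (c k₁) (c k₂) := by
    rw [dist_comm]; exact hr3 k₂ k₁ (Ne.symm hkne)
  have e7 : dist (c k₁) (c k₂) ≤ r k₁ + ε / 4 + ε / 4 + r k₂ := by
    have t1 : dist (c k₁) (c k₂) ≤ dist (c k₁) (g z) + dist (g z) (c k₂) := dist_triangle _ _ _
    have t2 : dist (c k₁) (g z) ≤ dist (c k₁) (g (x' k₁)) + dist (g (x' k₁)) (g z) :=
      dist_triangle _ _ _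
    have t3 : dist (g z) (c k₂) ≤ dist (g z) (g (x' k₂)) + dist (g (x' k₂)) (c k₂) :=
      dist_triangle _ _ _
    have t4 : dist (c k₁) (g (x' k₁)) = dist (g (x' k₁)) (c k₁) := dist_comm _ _
    have t5 : dist (g (x' k₁)) (g z) = dist (g z) (g (x' k₁)) := dist_comm _ _
    linarith
  have hr1 : r k₁ ≤ ε / 2 := by rcases le_total (r k₁) (r k₂) with h | h <;> nlinarith
  have hr2 : r k₂ ≤ ε / 2 := by rcases le_total (r k₁) (r k₂) with h | h <;> nlinarith
  by_cases hc1 : c k₁ = g z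
  · refine ⟨c k₂, ⟨⟨k₂, rfl⟩, ?_⟩, ?_⟩
    · intro h
      rw [Set.mem_singleton_iff] at h
      exact hkne (hcinj (by rw [hc1, h]))
    · calc dist (g z) (c k₂) ≤ dist (g z) (g (x' k₂)) + dist (g (x' k₂)) (c k₂) :=
            dist_triangle _ _ _
        _ < ε / 4 + r k₂ := by linarith
        _ ≤ ε / 4 + ε / 2 := by linarith
        _ < ε := by linarith
  · refine ⟨c k₁, ⟨⟨k₁, rfl⟩, ?_⟩, ?_⟩
    · intro h
      rw [Set.mem_singleton_iff] at h
      exact hc1 h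
    · calc dist (g z) (c k₁) ≤ dist (g z) (g (x' k₁)) + dist (g (x' k₁)) (c k₁) :=
            dist_triangle _ _ _
        _ < ε / 4 + r k₁ := by linarith
        _ ≤ ε / 4 + ε / 2 := by linarith
        _ < ε := by linarith

lemma clControl_conv {X : Type u} {M : Type w} [TopologicalSpace X] [MetricSpace M]
    {g : X → M} (hg : Continuous g) (hginj : Function.Injective g)
    (c : ℕ → M) (wp : M) (δ : ℕ → ℝ)
    (hδ : ∀ k, dist (c k) wp ≤ δ k) (hδpos : ∀ k, 0 < δ k)
    (hδhalf : ∀ k, δ (k + 1) ≤ δ k / 2)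
    (x' : ℕ → X) (hx' : ∀ k, dist (g (x' k)) (c k) < δ k)
    (I : Set ℕ) :
    ∀ z ∈ closure (x' '' I), z ∈ x' '' I ∨ g z = wp := by
  intro z hz
  by_cases hzI : z ∈ x' '' I
  · exact Or.inl hzI
  right
  by_contra hne
  have hρ : 0 < dist (g z) wp := dist_pos.mpr hne
  have hδmono : ∀ j k, j ≤ k → δ k ≤ δ j := by
    intro j k hjk
    induction k with
    | zero => rw [Nat.le_zero.mp hjk]
    | succ n ih =>
      rcases Nat.lt_or_ge j (n + 1) with h | h
      · have h1 := hδhalf n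
        have h2 := ih (Nat.lt_succ_iff.mp h)
        have h3 := hδpos n
        linarith
      · rw [le_antisymm hjk h]
  have hgeo : ∀ k, δ k ≤ δ 0 / 2 ^ k := by
    intro k
    induction k with
    | zero => simp
    | succ n ih =>
      have h1 := hδhalf n
      have h2 : δ 0 / 2 ^ (n + 1) = (δ 0 / 2 ^ n) / 2 := by ring
      rw [h2]
      linarith
  obtain ⟨K, hK⟩ : ∃ K : ℕ, 2 * δ K < dist (g z) wp := by
    obtain ⟨K, hK⟩ := pow_unbounded_of_one_lt (2 * δ 0 / dist (g z) wp) (one_lt_two (α := ℝ))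
    refine ⟨K, ?_⟩
    have h2 : (0 : ℝ) < 2 ^ K := by positivity
    have h3 := hgeo K
    rw [div_lt_iff₀ hρ] at hK
    have h4 : 2 * (δ 0 / 2 ^ K) < dist (g z) wp := by
      have h5 : 2 * (δ 0 / 2 ^ K) = 2 * δ 0 / 2 ^ K := by ring
      rw [h5, div_lt_iff₀ h2]
      linarith [mul_comm ((2 : ℝ) ^ K) (dist (g z) wp)]
    linarith
  have hzc : g z ∈ closure ((fun k => g (x' k)) '' I) := by
    have h2 := (image_closure_subset_closure_image hg) ⟨z, hz, rfl⟩
    rwa [Set.image_image] at h2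
  have hgzim : g z ∉ (fun k => g (x' k)) '' I := by
    rintro ⟨k, hkI, hk⟩
    exact hzI ⟨k, hkI, hginj hk⟩
  set Head := (fun k => g (x' k)) '' (I ∩ {k | k < K}) with hHead
  have hHeadfin : Head.Finite :=
    ((Set.finite_Iio K).subset (fun k hk => hk.2)).image _
  have hgzHead : g z ∉ Head := by
    rintro ⟨k, hk, hkeq⟩
    exact hgzim ⟨k, hk.1, hkeq⟩
  have hzc2 : g z ∈ closure (((fun k => g (x' k)) '' I) \ Head) := by
    have hsub : (fun k => g (x' k)) '' I ⊆ (((fun k => g (x' k)) '' I) \ Head) ∪ Head :=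
      fun b hb => (em (b ∈ Head)).elim Or.inr (fun h => Or.inl ⟨hb, h⟩)
    have h3 := closure_mono hsub hzc
    rw [closure_union, hHeadfin.isClosed.closure_eq] at h3
    rcases h3 with h3 | h3
    · exact h3
    · exact absurd h3 hgzHead
  have hsub2 : ((fun k => g (x' k)) '' I) \ Head ⊆ Metric.closedBall wp (2 * δ K) := by
    rintro b ⟨⟨k, hkI, rfl⟩, hbH⟩
    have hkK : K ≤ k := by
      by_contra h
      exact hbH ⟨k, ⟨hkI, Nat.lt_of_not_le h⟩, rfl⟩
    have h5 : dist (g (x' k)) wp ≤ 2 * δ k := by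
      calc dist (g (x' k)) wp ≤ dist (g (x' k)) (c k) + dist (c k) wp := dist_triangle _ _ _
        _ ≤ δ k + δ k := by linarith [le_of_lt (hx' k), hδ k]
        _ = 2 * δ k := by ring
    have hδk : δ k ≤ δ K := hδmono K k hkK
    rw [Metric.mem_closedBall]
    linarith
  have hfin : g z ∈ Metric.closedBall wp (2 * δ K) :=
    closure_minimal hsub2 Metric.isClosed_closedBall hzc2
  rw [Metric.mem_closedBall] at hfin
  linarith


lemma exists_escape_nbhd {Y : Type v} [TopologicalSpace Y] [T1Space Y] {QS : Set Y} {y : Y}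
    (hy : y ∈ QS) (hne : (nhdsWithin (⟨y, hy⟩ : QS) ({(⟨y, hy⟩ : QS)}ᶜ)).NeBot)
    (hnoconv : ¬∃ q : ℕ → Y, Function.Injective q ∧ (∀ n, q n ≠ y) ∧
      Filter.Tendsto q Filter.atTop (nhds y))
    (S : ℕ → Set Y) (hSo : ∀ n, IsOpen (S n)) (hSy : ∀ n, y ∈ S n) :
    ∃ H : Set Y, IsOpen H ∧ y ∈ H ∧ ∀ n, (((S n ∩ QS) \ {y}) \ H).Infinite := by
  by_contra hcon
  push_neg at hcon
  apply hnoconv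
  set T : ℕ → Set Y := fun i => ⋂ l ∈ Finset.range (i + 1), S l with hT
  have hTo : ∀ i, IsOpen (T i) := fun i => isOpen_biInter_finset fun l _ => hSo l
  have hTy : ∀ i, y ∈ T i := fun i => Set.mem_biInter fun l _ => hSy l
  have hTsub : ∀ i n, n ≤ i → T i ⊆ S n := by
    intro i n hni b hb
    rw [Set.mem_iInter₂] at hb
    exact hb n (Finset.mem_range.mpr (Nat.lt_succ_of_le hni))
  have hinf : ∀ i, ((T i ∩ QS) \ {y}).Infinite :=
    fun i => trace_infinite hy hne (hTo i) (hTy i)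
  obtain ⟨q, hqmem, hqinj⟩ := exists_injective_selection _ hinf
  refine ⟨q, hqinj, fun n h => (hqmem n).2 (by simp [h]), ?_⟩
  rw [tendsto_atTop_nhds]
  intro U hyU hUo
  obtain ⟨n₀, hn₀⟩ := hcon U hUo hyU
  have hbadfin : {i : ℕ | q i ∈ ((S n₀ ∩ QS) \ {y}) \ U}.Finite :=
    hn₀.preimage (Function.Injective.injOn hqinj)
  obtain ⟨N₁, hN₁⟩ := hbadfin.bddAbove
  refine ⟨max n₀ (N₁ + 1), fun n hn => ?_⟩
  have h1 : q n ∈ (S n₀ ∩ QS) \ {y} := by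
    have h2 := hqmem n
    exact ⟨⟨hTsub n n₀ (le_trans (le_max_left _ _) hn) h2.1.1, h2.1.2⟩, h2.2⟩
  by_cases hqU : q n ∈ U
  · exact hqU
  · exfalso
    have h3 : n ∈ {i : ℕ | q i ∈ ((S n₀ ∩ QS) \ {y}) \ U} := ⟨h1, hqU⟩
    have h4 := hN₁ h3
    have h5 : N₁ + 1 ≤ n := le_trans (le_max_right _ _) hn
    omega

lemma defeat {X : Type u} {Y : Type v} [TopologicalSpace X] [TopologicalSpace Y]
    {f : X → Y} (hfc : IsClosedMap f) {QS : Set Y} {y : Y} (hy : y ∈ QS)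
    (U : ℕ → Set QS)
    (hsel : ∀ x : ℕ → QS, (∀ i, x i ∈ U i) → Function.Injective x →
      ∃ p : QS, p ∈ closure (Set.range x \ {p}))
    (v : ℕ → Y) (hvinj : Function.Injective v) (hvQ : ∀ k, v k ∈ QS)
    (hvU : ∀ k, (⟨v k, hvQ k⟩ : QS) ∈ U k)
    (x' : ℕ → X) (hfx' : ∀ k, f (x' k) = v k)
    (C : Set X)
    (hCC : ∀ I : Set ℕ, ∀ z ∈ closure (x' '' I), z ∈ x' '' I ∨ z ∈ C)
    (hCv : ∀ z ∈ C, f z ∉ closure (Set.range v)) : False := by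
  obtain ⟨p, hp⟩ := hsel (fun k => ⟨v k, hvQ k⟩) hvU
    (fun a b hab => hvinj (congrArg Subtype.val hab))
  rw [closure_subtype] at hp
  set I : Set ℕ := {k | v k ≠ (p : Y)} with hI
  have himg : (Subtype.val '' (Set.range (fun k => (⟨v k, hvQ k⟩ : QS)) \ {p})) = v '' I := by
    ext b
    constructor
    · rintro ⟨a, ⟨⟨k, rfl⟩, hap⟩, rfl⟩
      exact ⟨k, fun h => hap (by apply Subtype.ext; exact h), rfl⟩
    · rintro ⟨k, hkI, rfl⟩
      exact ⟨⟨v k, hvQ k⟩, ⟨⟨k, rfl⟩, fun h => hkI (congrArg Subtype.val h)⟩, rfl⟩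
  rw [himg] at hp
  have himg2 : v '' I = f '' (x' '' I) := by
    rw [Set.image_image]
    exact Set.image_congr fun k _ => (hfx' k).symm
  have hp2 : (p : Y) ∈ f '' closure (x' '' I) :=
    (hfc.closure_image_subset _) (by rw [← himg2]; exact hp)
  obtain ⟨z, hzcl, hzp⟩ := hp2
  rcases hCC I z hzcl with hzi | hzC
  · obtain ⟨k, hkI, rfl⟩ := hzi
    exact hkI (by rw [← hfx' k, hzp])
  · exact hCv z hzC (by rw [hzp]; exact closure_mono (Set.image_subset_range v I) hp)


/-- Generic final contradiction step for the "no convergent sequence" case. -/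
lemma tailB {X : Type u} {Y : Type v} {M : Type w} [TopologicalSpace X] [TopologicalSpace Y]
    [T1Space Y] [MetricSpace M]
    {g : X → M} (hg : Continuous g) (hginj : Function.Injective g)
    {f : X → Y} (hf : Continuous f) (hfo : IsOpenMap f) (hfc : IsClosedMap f)
    {QS : Set Y} {y : Y} (hy : y ∈ QS)
    (hne : (nhdsWithin (⟨y, hy⟩ : QS) ({(⟨y, hy⟩ : QS)}ᶜ)).NeBot)
    (U : ℕ → Set QS) (hUo : ∀ i, IsOpen (U i) ∧ (⟨y, hy⟩ : QS) ∈ U i)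
    (hsel : ∀ x : ℕ → QS, (∀ i, x i ∈ U i) → Function.Injective x →
      ∃ p : QS, p ∈ closure (Set.range x \ {p}))
    (hnoconv : ¬∃ q : ℕ → Y, Function.Injective q ∧ (∀ n, q n ≠ y) ∧
      Filter.Tendsto q Filter.atTop (nhds y))
    (c : ℕ → M) (r : ℕ → ℝ)
    (hcF : ∀ k, ∃ x₀, f x₀ = y ∧ dist (g x₀) (c k) < r k)
    (C : Set X) (V : Set Y) (hVo : IsOpen V) (hyV : y ∈ V)
    (hCC : ∀ x' : ℕ → X, (∀ k, dist (g (x' k)) (c k) < r k) →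
      ∀ I : Set ℕ, ∀ z ∈ closure (x' '' I), z ∈ x' '' I ∨ z ∈ C)
    (hCV : ∀ z ∈ C, f z = y ∨ f z ∉ closure V) : False := by
  classical
  -- representing opens for the U k
  have hWk : ∀ k, ∃ W : Set Y, IsOpen W ∧ y ∈ W ∧ Subtype.val ⁻¹' W = U k := by
    intro k
    obtain ⟨W, hWo, hWeq⟩ := isOpen_induced_iff.mp (hUo k).1
    refine ⟨W, hWo, ?_, hWeq⟩
    have h2 := (hUo k).2
    rw [← hWeq] at h2
    exact h2
  choose Wk hWko hWky hWkeq using hWk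
  -- balls upstairs
  set B : ℕ → Set X := fun k => g ⁻¹' Metric.ball (c k) (r k) with hB
  have hBo : ∀ k, IsOpen (B k) := fun k => Metric.isOpen_ball.preimage hg
  have hyB : ∀ k, y ∈ f '' B k := by
    intro k
    obtain ⟨x₀, h1, h2⟩ := hcF k
    exact ⟨x₀, by rwa [hB, Set.mem_preimage, Metric.mem_ball], h1⟩
  set S : ℕ → Set Y := fun k => (f '' B k ∩ Wk k) ∩ V with hS
  have hSo : ∀ k, IsOpen (S k) := fun k => ((hfo _ (hBo k)).inter (hWko k)).inter hVo
  have hSy : ∀ k, y ∈ S k := fun k => ⟨⟨hyB k, hWky k⟩, hyV⟩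
  obtain ⟨H, hHo, hyH, hHinf⟩ := exists_escape_nbhd hy hne hnoconv S hSo hSy
  obtain ⟨v, hvmem, hvinj⟩ := exists_injective_selection
    (fun k => ((S k ∩ QS) \ {y}) \ H) hHinf
  have hvS : ∀ k, v k ∈ f '' B k := fun k => (hvmem k).1.1.1.1.1
  choose x' hx'B hx'v using hvS
  have hvQ : ∀ k, v k ∈ QS := fun k => (hvmem k).1.1.2
  have hvU : ∀ k, (⟨v k, hvQ k⟩ : QS) ∈ U k := by
    intro k
    rw [← hWkeq k]
    exact (hvmem k).1.1.1.1.2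
  have hdist : ∀ k, dist (g (x' k)) (c k) < r k := by
    intro k
    have := hx'B k
    rwa [hB, Set.mem_preimage, Metric.mem_ball] at this
  refine defeat hfc hy U hsel v hvinj hvQ hvU x' hx'v C (hCC x' hdist) ?_
  intro z hzC
  rcases hCV z hzC with h | h
  · -- f z = y, but y is not in the closure of the range of v since v avoids H
    intro hmem
    have hsub : Set.range v ⊆ Hᶜ := by
      rintro b ⟨k, rfl⟩
      exact (hvmem k).2
    have h2 : closure (Set.range v) ⊆ Hᶜ :=
      closure_minimal hsub (isClosed_compl_iff.mpr hHo)
    exact (h2 (h ▸ hmem)) hyH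
  · -- f z ∉ closure V while range v ⊆ V
    intro hmem
    apply h
    refine closure_mono ?_ hmem
    rintro b ⟨k, rfl⟩
    exact (hvmem k).1.1.1.2


/-- Case B : if there is no nontrivial convergent sequence to `y`, the fibre over `y`
is finite. -/
lemma caseB {X : Type u} {Y : Type v} {M : Type w} [TopologicalSpace X] [TopologicalSpace Y]
    [T1Space X] [T1Space Y] [MetricSpace M]
    {g : X → M} (hg : Continuous g) (hginj : Function.Injective g)
    {f : X → Y} (hf : Continuous f) (hfo : IsOpenMap f) (hfc : IsClosedMap f)
    (hFH : FunctionallyHausdorff Y)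
    {QS : Set Y} {y : Y} (hy : y ∈ QS)
    (hne : (nhdsWithin (⟨y, hy⟩ : QS) ({(⟨y, hy⟩ : QS)}ᶜ)).NeBot)
    (hqp : IsQPoint (⟨y, hy⟩ : QS))
    (hnoconv : ¬∃ q : ℕ → Y, Function.Injective q ∧ (∀ n, q n ≠ y) ∧
      Filter.Tendsto q Filter.atTop (nhds y)) :
    (f ⁻¹' {y}).Finite := by
  classical
  rw [← Set.not_infinite]
  intro hinf
  set xe := hinf.natEmbedding with hxe
  set x : ℕ → X := fun n => (xe n : X) with hx
  have hxinj : Function.Injective x := fun a b hab => xe.injective (Subtype.ext hab)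
  have hxF : ∀ n, f (x n) = y := fun n => (xe n).2
  obtain ⟨U, hUo, hsel⟩ := hqp
  by_cases hw : ∃ wp : M, wp ∈ closure (Set.range (fun n => g (x n)) \ {wp})
  · -- there is an accumulation point of the centres
    obtain ⟨wp, hwacc⟩ := hw
    -- step lemma
    have hstep : ∀ ε : ℝ, 0 < ε → ∃ n, 0 < dist (g (x n)) wp ∧ dist (g (x n)) wp < ε := by
      intro ε hε
      rw [Metric.mem_closure_iff] at hwacc
      obtain ⟨b, hbmem, hbd⟩ := hwacc ε hε
      obtain ⟨⟨n, rfl⟩, hbne⟩ := hbmem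
      rw [Set.mem_singleton_iff] at hbne
      refine ⟨n, dist_pos.mpr hbne, by rwa [dist_comm] at hbd⟩
    have hstep0 : ∀ prev : ℕ, ∃ n, 0 < dist (g (x prev)) wp →
        (0 < dist (g (x n)) wp ∧ dist (g (x n)) wp ≤ dist (g (x prev)) wp / 2) := by
      intro prev
      by_cases hpos : 0 < dist (g (x prev)) wp
      · obtain ⟨n, h1, h2⟩ := hstep (dist (g (x prev)) wp / 2) (by linarith)
        exact ⟨n, fun _ => ⟨h1, le_of_lt h2⟩⟩
      · exact ⟨0, fun h => absurd h hpos⟩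
    obtain ⟨n₀, hn₀pos, _⟩ := hstep 1 one_pos
    set m : ℕ → ℕ := fun k => Nat.rec n₀ (fun _ prev => (hstep0 prev).choose) k with hm
    have hmrec : ∀ k, m (k + 1) = (hstep0 (m k)).choose := fun k => rfl
    set δ : ℕ → ℝ := fun k => dist (g (x (m k))) wp with hδdef
    have hδpos : ∀ k, 0 < δ k := by
      intro k
      induction k with
      | zero => exact hn₀pos
      | succ n ih =>
        show 0 < dist (g (x (m (n + 1)))) wp
        rw [hmrec n]
        exact ((hstep0 (m n)).choose_spec ih).1
    have hδhalf : ∀ k, δ (k + 1) ≤ δ k / 2 := by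
      intro k
      show dist (g (x (m (k + 1)))) wp ≤ dist (g (x (m k))) wp / 2
      rw [hmrec k]
      exact ((hstep0 (m k)).choose_spec (hδpos k)).2
    -- C and V
    by_cases hz0 : ∃ z₀ : X, g z₀ = wp
    · obtain ⟨z₀, hz₀⟩ := hz0
      by_cases hfz : f z₀ = y
      · -- V = univ
        refine tailB hg hginj hf hfo hfc hy hne U hUo hsel hnoconv
          (fun k => g (x (m k))) δ (fun k => ⟨x (m k), hxF (m k), by simp [hδpos k]⟩)
          {z | g z = wp} Set.univ isOpen_univ (Set.mem_univ y) ?_ ?_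
        · intro x' hx' I z hz
          exact clControl_conv hg hginj _ wp δ (fun k => le_refl _) hδpos hδhalf x' hx' I z hz
        · intro z hz
          left
          have : z = z₀ := hginj (by rw [hz, hz₀])
          rw [this, hfz]
      · -- separate y from f z₀
        obtain ⟨φ, hφc, hφ01, hφy, hφz⟩ := hFH y (f z₀) (fun h => hfz h.symm)
        refine tailB hg hginj hf hfo hfc hy hne U hUo hsel hnoconv
          (fun k => g (x (m k))) δ (fun k => ⟨x (m k), hxF (m k), by simp [hδpos k]⟩)
          {z | g z = wp} (φ ⁻¹' Set.Iio (1/2)) (isOpen_Iio.preimage hφc)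
          (by simp [hφy]) ?_ ?_
        · intro x' hx' I z hz
          exact clControl_conv hg hginj _ wp δ (fun k => le_refl _) hδpos hδhalf x' hx' I z hz
        · intro z hz
          right
          have hzz : z = z₀ := hginj (by rw [hz, hz₀])
          intro hmem
          have h2 : closure (φ ⁻¹' Set.Iio (1/2)) ⊆ φ ⁻¹' Set.Iic (1/2) := by
            have := Continuous.closure_preimage_subset hφc (Set.Iio (1/2 : ℝ))
            rwa [closure_Iio] at this
          have h3 := h2 hmem
          rw [Set.mem_preimage, Set.mem_Iic, hzz, hφz] at h3
          linarith
    · -- no preimage of wp : C = ∅ effectively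
      refine tailB hg hginj hf hfo hfc hy hne U hUo hsel hnoconv
        (fun k => g (x (m k))) δ (fun k => ⟨x (m k), hxF (m k), by simp [hδpos k]⟩)
        {z | g z = wp} Set.univ isOpen_univ (Set.mem_univ y) ?_ ?_
      · intro x' hx' I z hz
        exact clControl_conv hg hginj _ wp δ (fun k => le_refl _) hδpos hδhalf x' hx' I z hz
      · intro z hz
        exact absurd ⟨z, hz⟩ hz0
  · -- no accumulation point : discrete case
    push_neg at hw
    set c : ℕ → M := fun n => g (x n) with hc
    have hcinj : Function.Injective c := fun a b hab => hxinj (hginj hab)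
    have hrad : ∀ k, ∃ rr : ℝ, 0 < rr ∧ ∀ mm, mm ≠ k → rr * 3 ≤ dist (c k) (c mm) := by
      intro k
      have h1 := hw (c k)
      rw [Metric.mem_closure_iff] at h1
      push_neg at h1
      obtain ⟨ε, hε, h2⟩ := h1
      refine ⟨ε / 3, by linarith, ?_⟩
      intro mm hmm
      have h3 : c mm ∈ Set.range c \ {c k} :=
        ⟨⟨mm, rfl⟩, fun h => hmm (hcinj (by rw [Set.mem_singleton_iff] at h; exact h))⟩
      have h4 := h2 (c mm) h3
      linarith
    choose r hrpos hr3' using hrad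
    refine tailB hg hginj hf hfo hfc hy hne U hUo hsel hnoconv
      c r (fun k => ⟨x k, hxF k, by simp [hc, hrpos k]⟩)
      ∅ Set.univ isOpen_univ (Set.mem_univ y) ?_ ?_
    · intro x' hx' I z hz
      exact Or.inl (clControl_discrete hg hginj c hcinj hw r
        (fun k mm hkm => hr3' k mm (Ne.symm hkm)) x' hx' I z hz)
    · intro z hz
      exact absurd hz (Set.notMem_empty z)


/-- Case A : if there is a nontrivial sequence converging to `y`, then the image under `g` of
the fibre over `y` is sequentially compact. -/
lemma caseA {X : Type u} {Y : Type v} {M : Type w} [TopologicalSpace X] [TopologicalSpace Y]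
    [T1Space X] [T1Space Y] [MetricSpace M]
    {g : X → M} (hg : Continuous g) (hginj : Function.Injective g)
    {f : X → Y} (hf : Continuous f) (hfo : IsOpenMap f) (hfc : IsClosedMap f)
    (hFH : FunctionallyHausdorff Y) {y : Y}
    (q : ℕ → Y) (hqinj : Function.Injective q) (hqny : ∀ n, q n ≠ y)
    (hqconv : Filter.Tendsto q Filter.atTop (nhds y)) :
    IsSeqCompact (g '' (f ⁻¹' {y})) := by
  classical
  intro u hu
  have hz : ∀ n, ∃ zz : X, f zz = y ∧ g zz = u n := by
    intro n
    obtain ⟨xx, hx1, hx2⟩ := hu n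
    exact ⟨xx, hx1, hx2⟩
  choose z hzF hzg using hz
  set O : ℕ → Set X := fun i => g ⁻¹' Metric.ball (u i) (1 / (i + 1)) with hO
  have hOpos : ∀ i : ℕ, (0:ℝ) < 1 / (i + 1) := by
    intro i
    positivity
  have hOo : ∀ i, IsOpen (O i) := fun i => Metric.isOpen_ball.preimage hg
  have hzO : ∀ i, z i ∈ O i := by
    intro i
    rw [hO, Set.mem_preimage, Metric.mem_ball, hzg i, dist_self]
    exact hOpos i
  -- strictly monotone k with q (k i) ∈ f '' O i
  have hqO : ∀ i N, ∃ kk, N ≤ kk ∧ q kk ∈ f '' O i := by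
    intro i N
    have hyO : y ∈ f '' O i := ⟨z i, hzO i, hzF i⟩
    obtain ⟨N₀, hN₀⟩ := (tendsto_atTop_nhds.mp hqconv) (f '' O i) hyO (hfo _ (hOo i))
    exact ⟨max N N₀, le_max_left _ _, hN₀ _ (le_max_right _ _)⟩
  obtain ⟨k, hkmono, hkO⟩ := exists_strictMono_choice hqO
  have hx'' : ∀ i, ∃ xx, xx ∈ O i ∧ f xx = q (k i) := fun i => hkO i
  choose x'' hx''O hx''f using hx''
  set A : Set X := Set.range x'' with hA
  -- Subclaim 1 : A has an accumulation point
  have h1 : ∃ zs : X, zs ∈ closure (A \ {zs}) := by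
    by_contra hno
    push_neg at hno
    have hAcl : IsClosed A := by
      rw [← closure_subset_iff_isClosed]
      intro a ha
      by_contra haA
      have hno2 := hno a
      rw [Set.diff_singleton_eq_self haA] at hno2
      exact hno2 ha
    have hfA : IsClosed (f '' A) := hfc A hAcl
    have hyA : y ∈ closure (f '' A) := by
      apply mem_closure_of_tendsto (hqconv.comp hkmono.tendsto_atTop)
      filter_upwards with n
      exact ⟨x'' n, Set.mem_range_self n, hx''f n⟩
    rw [hfA.closure_eq] at hyA
    obtain ⟨a, ⟨n, rfl⟩, hfa⟩ := hyA
    rw [hx''f n] at hfa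
    exact hqny (k n) hfa
  obtain ⟨zs, hzs⟩ := h1
  -- Subclaim 2 : f zs = y
  have h2 : f zs = y := by
    by_contra hwne
    have hw1 : f zs ∈ closure (Set.range fun i => q (k i)) := by
      have hin := (image_closure_subset_closure_image hf) ⟨zs, hzs, rfl⟩
      refine closure_mono ?_ hin
      rintro b ⟨a, ⟨⟨n, rfl⟩, _⟩, rfl⟩
      exact ⟨n, (hx''f n).symm⟩
    obtain ⟨φ, hφc, hφ01, hφy, hφw⟩ := hFH y (f zs) (fun h => hwne h.symm)
    have htail : ∀ᶠ n in Filter.atTop, φ (q (k n)) < 1 / 3 := by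
      have hcomp : Filter.Tendsto (fun n => φ (q (k n))) Filter.atTop (nhds (φ y)) :=
        (hφc.tendsto y).comp (hqconv.comp hkmono.tendsto_atTop)
      rw [hφy] at hcomp
      exact hcomp.eventually_lt_const (by norm_num)
    obtain ⟨N, hN⟩ := Filter.eventually_atTop.mp htail
    have hsplit : (Set.range fun i => q (k i)) ⊆
        ((fun i => q (k i)) '' Set.Iio N) ∪ φ ⁻¹' Set.Iio (1 / 3) := by
      rintro b ⟨i, rfl⟩
      rcases Nat.lt_or_ge i N with h | h
      · exact Or.inl ⟨i, h, rfl⟩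
      · exact Or.inr (hN i h)
    have hwmem : f zs ∈ ((fun i => q (k i)) '' Set.Iio N) ∪ φ ⁻¹' Set.Iic (1 / 3) := by
      have h3 := closure_mono hsplit hw1
      rw [closure_union] at h3
      rcases h3 with h3 | h3
      · left
        have hfin : ((fun i => q (k i)) '' Set.Iio N).Finite := (Set.finite_Iio N).image _
        rwa [hfin.isClosed.closure_eq] at h3
      · refine Or.inr ?_
        have h4 := Continuous.closure_preimage_subset hφc (Set.Iio (1/3 : ℝ))
        rw [closure_Iio] at h4
        exact h4 h3
    rcases hwmem with hwmem | hwmem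
    · -- f zs = q (k m) for some m < N
      obtain ⟨mm, hmm, hweq⟩ := hwmem
      -- construct the isolating open set H
      set Bad := (((fun i => q (k i)) '' Set.Iio N) \ {f zs}) with hBad
      have hBadfin : Bad.Finite := ((Set.finite_Iio N).image _).diff
      set H := (φ ⁻¹' Set.Ioi (1 / 3)) \ Bad with hH
      have hHo : IsOpen H := (isOpen_Ioi.preimage hφc).sdiff hBadfin.isClosed
      have hwH : f zs ∈ H := by
        constructor
        · rw [Set.mem_preimage, Set.mem_Ioi, hφw]; norm_num
        · intro hb; exact hb.2 rfl
      have h5 : zs ∈ closure (f ⁻¹' H ∩ (A \ {zs})) :=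
        (hHo.preimage hf).inter_closure ⟨hwH, hzs⟩
      have hsub : f ⁻¹' H ∩ (A \ {zs}) ⊆ {x'' mm} \ {zs} := by
        rintro a ⟨haH, ⟨⟨i, rfl⟩, hane⟩⟩
        have hqH : q (k i) ∈ H := by rw [← hx''f i]; exact haH
        have hqeq : q (k i) = f zs := by
          rcases Nat.lt_or_ge i N with h | h
          · by_contra hne2
            exact hqH.2 ⟨⟨i, h, rfl⟩, hne2⟩
          · exfalso
            have := hN i h
            have h6 := hqH.1
            rw [Set.mem_preimage, Set.mem_Ioi] at h6
            linarith
        have him : i = mm := by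
          have : q (k i) = q (k mm) := by rw [hqeq, ← hweq]
          exact hkmono.injective (hqinj this)
        subst him
        exact ⟨rfl, hane⟩
      have h7 := closure_mono hsub h5
      rcases eq_or_ne (x'' mm) zs with heq | hne3
      · rw [heq] at h7
        simp at h7
      · rw [Set.diff_singleton_eq_self (by simp [Ne.symm hne3])] at h7
        rw [closure_singleton] at h7
        exact hne3 (h7.symm)
    · rw [Set.mem_preimage, Set.mem_Iic, hφw] at hwmem
      linarith
  -- Subclaim 3 : tails accumulate at zs
  have h3 : ∀ N : ℕ, zs ∈ closure ((x'' '' {i | N ≤ i}) \ {zs}) := by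
    intro N
    have hsplit : A \ {zs} ⊆
        ((x'' '' Set.Iio N) \ {zs}) ∪ ((x'' '' {i | N ≤ i}) \ {zs}) := by
      rintro a ⟨⟨i, rfl⟩, hane⟩
      rcases Nat.lt_or_ge i N with h | h
      · exact Or.inl ⟨⟨i, h, rfl⟩, hane⟩
      · exact Or.inr ⟨⟨i, h, rfl⟩, hane⟩
    have h4 := closure_mono hsplit hzs
    rw [closure_union] at h4
    rcases h4 with h4 | h4
    · exfalso
      have hfin : ((x'' '' Set.Iio N) \ {zs}).Finite := ((Set.finite_Iio N).image _).diff
      rw [hfin.isClosed.closure_eq] at h4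
      -- zs ∈ set \ {zs} is absurd
      exact h4.2 rfl
    · exact h4
  -- cluster property
  have h4 : ∀ ε : ℝ, 0 < ε → ∀ N : ℕ, ∃ i, N ≤ i ∧ dist (g zs) (u i) < ε := by
    intro ε hε N
    obtain ⟨N₁, hN₁⟩ := exists_nat_one_div_lt (show (0:ℝ) < ε / 2 by linarith)
    set N' := max N N₁ with hN'
    have h5 := h3 N'
    rw [_root_.mem_closure_iff] at h5
    obtain ⟨a, haball, hamem⟩ := h5 (g ⁻¹' Metric.ball (g zs) (ε / 2))
      (Metric.isOpen_ball.preimage hg)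
      (by rw [Set.mem_preimage, Metric.mem_ball, dist_self]; linarith)
    obtain ⟨⟨i, hiN, rfl⟩, _⟩ := hamem
    refine ⟨i, le_trans (le_max_left _ _) hiN, ?_⟩
    have hd1 : dist (g zs) (g (x'' i)) < ε / 2 := by
      rw [Set.mem_preimage, Metric.mem_ball, dist_comm] at haball
      exact haball
    have hd2 : dist (g (x'' i)) (u i) < 1 / (i + 1) := by
      have := hx''O i
      rwa [hO, Set.mem_preimage, Metric.mem_ball] at this
    have hd3 : (1 : ℝ) / (i + 1) ≤ 1 / (N₁ + 1) := by
      apply one_div_le_one_div_of_le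
      · positivity
      · have : (N₁ : ℝ) ≤ i := by
          exact_mod_cast le_trans (le_max_right N N₁) hiN
        linarith
    calc dist (g zs) (u i) ≤ dist (g zs) (g (x'' i)) + dist (g (x'' i)) (u i) :=
          dist_triangle _ _ _
      _ < ε / 2 + 1 / (i + 1) := by linarith
      _ ≤ ε / 2 + 1 / (N₁ + 1) := by linarith
      _ < ε / 2 + ε / 2 := by linarith
      _ = ε := by ring
  -- extract subsequence
  have h7 : ∀ j N : ℕ, ∃ i, N ≤ i ∧ dist (g zs) (u i) < 1 / (j + 1) := by
    intro j N
    exact h4 (1 / (j + 1)) (by positivity) N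
  obtain ⟨ψ, hψmono, hψd⟩ := exists_strictMono_choice h7
  refine ⟨g zs, ⟨zs, h2, rfl⟩, ψ, hψmono, ?_⟩
  rw [Metric.tendsto_atTop]
  intro ε hε
  obtain ⟨N₁, hN₁⟩ := exists_nat_one_div_lt hε
  refine ⟨N₁, fun n hn => ?_⟩
  have h8 : dist (g zs) (u (ψ n)) < 1 / (n + 1) := hψd n
  have h9 : (1 : ℝ) / (n + 1) ≤ 1 / (N₁ + 1) := by
    apply one_div_le_one_div_of_le
    · positivity
    · exact_mod_cast by omega
  rw [dist_comm]
  calc dist (g zs) (u (ψ n)) < 1 / (n + 1) := h8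
    _ ≤ 1 / (N₁ + 1) := h9
    _ < ε := hN₁


lemma metrizable_induced {Y : Type v} {Z : Type w} [TopologicalSpace Z]
    [TopologicalSpace.MetrizableSpace Z] (h : Y → Z) (hinj : Function.Injective h) :
    @TopologicalSpace.MetrizableSpace Y (TopologicalSpace.induced h ‹_›) := by
  letI : TopologicalSpace Y := TopologicalSpace.induced h ‹_›
  have hemb : Topology.IsEmbedding h := ⟨⟨rfl⟩, hinj⟩
  exact hemb.metrizableSpace

/-- The main abstract statement. -/
theorem key {X : Type u} {Y : Type v} {M : Type w} [TopologicalSpace X] [TopologicalSpace Y]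
    [T1Space X] [T1Space Y] [MetricSpace M]
    (g : X → M) (hg : Continuous g) (hginj : Function.Injective g)
    (hFH : FunctionallyHausdorff Y)
    (hq : ∀ y : Y, ∃ (Q : Set Y) (hy : y ∈ Q),
      (nhdsWithin (⟨y, hy⟩ : Q) ({(⟨y, hy⟩ : Q)}ᶜ)).NeBot ∧ IsQPoint (⟨y, hy⟩ : Q))
    (f : X → Y) (hf : Continuous f) (hsurj : Function.Surjective f)
    (hfo : IsOpenMap f) (hfc : IsClosedMap f) :
    Submetrizable Y := by
  classical
  have hcomp : ∀ y : Y, IsCompact (g '' (f ⁻¹' {y})) := by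
    intro y
    by_cases hconv : ∃ q : ℕ → Y, Function.Injective q ∧ (∀ n, q n ≠ y) ∧
        Filter.Tendsto q Filter.atTop (nhds y)
    · obtain ⟨q, h1, h2, h3⟩ := hconv
      exact (caseA hg hginj hf hfo hfc hFH q h1 h2 h3).isCompact
    · obtain ⟨Q, hy, hne, hqp⟩ := hq y
      exact ((caseB hg hginj hf hfo hfc hFH hy hne hqp hconv).image g).isCompact
  have hnonemp : ∀ y : Y, (g '' (f ⁻¹' {y})).Nonempty := by
    intro y
    obtain ⟨x, hx⟩ := hsurj y
    exact ⟨g x, x, by simp [hx], rfl⟩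
  set h : Y → TopologicalSpace.NonemptyCompacts M :=
    fun y => ⟨⟨g '' (f ⁻¹' {y}), hcomp y⟩, hnonemp y⟩ with hh
  have hinj : Function.Injective h := by
    intro a b hab
    have hseteq : g '' (f ⁻¹' {a}) = g '' (f ⁻¹' {b}) := by
      have := congrArg (fun s : TopologicalSpace.NonemptyCompacts M => (s : Set M)) hab
      exact this
    obtain ⟨x, hx⟩ := hsurj a
    have hmem : g x ∈ g '' (f ⁻¹' {b}) := hseteq ▸ ⟨x, by simp [hx], rfl⟩
    obtain ⟨x', hx', hgx⟩ := hmem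
    have hxx : x' = x := hginj hgx
    rw [← hx, ← hx'.out]
    rw [hxx]
  have hcont : Continuous h := by
    rw [continuous_iff_continuousAt]
    intro y
    rw [ContinuousAt, Metric.tendsto_nhds]
    intro ε hε
    -- upper semicontinuity open set
    set O₁ : Set X := g ⁻¹' Metric.thickening (ε / 4) (g '' (f ⁻¹' {y})) with hO₁
    have hO₁o : IsOpen O₁ := Metric.isOpen_thickening.preimage hg
    have hFO₁ : f ⁻¹' {y} ⊆ O₁ := by
      intro x hx
      rw [hO₁, Set.mem_preimage, Metric.mem_thickening_iff]
      exact ⟨g x, ⟨x, hx, rfl⟩, by rw [dist_self]; linarith⟩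
    set W₁ : Set Y := (f '' O₁ᶜ)ᶜ with hW₁
    have hW₁o : IsOpen W₁ := (hfc _ (isClosed_compl_iff.mpr hO₁o)).isOpen_compl
    have hyW₁ : y ∈ W₁ := by
      intro hmem
      obtain ⟨x, hx1, hx2⟩ := hmem
      exact hx1 (hFO₁ (by simp [hx2]))
    -- lower semicontinuity open set
    obtain ⟨t, htsub, htcov⟩ := (hcomp y).elim_nhds_subcover
      (fun b => Metric.ball b (ε / 4)) (fun b _ => Metric.ball_mem_nhds b (by linarith))
    set W₂ : Set Y := ⋂ b ∈ t, f '' (g ⁻¹' Metric.ball b (ε / 4)) with hW₂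
    have hW₂o : IsOpen W₂ :=
      isOpen_biInter_finset fun b _ => hfo _ (Metric.isOpen_ball.preimage hg)
    have hyW₂ : y ∈ W₂ := by
      rw [hW₂, Set.mem_iInter₂]
      intro b hb
      obtain ⟨xb, hxb1, hxb2⟩ := htsub b hb
      exact ⟨xb, by rw [Set.mem_preimage, hxb2, Metric.mem_ball, dist_self]; linarith, hxb1.out⟩
    -- eventually
    have hWo : IsOpen (W₁ ∩ W₂) := hW₁o.inter hW₂o
    refine Filter.eventually_of_mem (hWo.mem_nhds ⟨hyW₁, hyW₂⟩) ?_
    intro y' hy'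
    have hbound : dist (h y') (h y) ≤ ε / 2 := by
      rw [Metric.NonemptyCompacts.dist_eq]
      apply Metric.hausdorffDist_le_of_mem_dist (by linarith)
      · intro b' hb'
        obtain ⟨xx, hxx, rfl⟩ := hb'
        have hxO : xx ∈ O₁ := by
          by_contra hxO
          refine hy'.1 ⟨xx, hxO, ?_⟩
          simpa using hxx
        rw [hO₁, Set.mem_preimage, Metric.mem_thickening_iff] at hxO
        obtain ⟨b, hb, hdb⟩ := hxO
        exact ⟨b, hb, by linarith [le_of_lt hdb]⟩
      · intro b hb
        obtain ⟨b₀, hb₀t, hb₀⟩ := Set.mem_iUnion₂.mp (htcov hb)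
        have h2 := Set.mem_iInter₂.mp hy'.2 b₀ hb₀t
        obtain ⟨xx, hxx, hfxx⟩ := h2
        refine ⟨g xx, ⟨xx, by simp [hfxx], rfl⟩, ?_⟩
        have hd1 : dist b b₀ < ε / 4 := Metric.mem_ball.mp hb₀
        have hd2 : dist (g xx) b₀ < ε / 4 := Metric.mem_ball.mp hxx
        calc dist b (g xx) ≤ dist b b₀ + dist b₀ (g xx) := dist_triangle _ _ _
          _ ≤ ε / 4 + ε / 4 := by rw [dist_comm b₀ (g xx)]; linarith
          _ = ε / 2 := by ring
    exact lt_of_le_of_lt hbound (by linarith)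
  refine ⟨TopologicalSpace.induced h inferInstance, continuous_iff_le_induced.mp hcont, ?_⟩
  exact metrizable_induced h hinj

/-- Wrapper with a named topology instance. -/
theorem key' {X : Type u} {Y : Type v} [tX : TopologicalSpace X] [tY : TopologicalSpace Y]
    [t1X : @T1Space X tX] [t1Y : @T1Space Y tY]
    (hX : @Submetrizable X tX)
    (hFH : FunctionallyHausdorff Y)
    (hq : ∀ y : Y, ∃ (Q : Set Y) (hy : y ∈ Q),
      (nhdsWithin (⟨y, hy⟩ : Q) ({(⟨y, hy⟩ : Q)}ᶜ)).NeBot ∧ IsQPoint (⟨y, hy⟩ : Q))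
    (f : X → Y) (hf : @Continuous X Y tX tY f) (hsurj : Function.Surjective f)
    (hfo : @IsOpenMap X Y tX tY f) (hfc : @IsClosedMap X Y tX tY f) :
    Submetrizable Y := by
  obtain ⟨σ, hle, hmet⟩ := hX
  refine @key X Y X tX tY t1X t1Y
    (@TopologicalSpace.metrizableSpaceMetric X σ hmet) id ?_
    (fun a b hh => hh) hFH hq f hf hsurj hfo hfc
  rw [@continuous_id_iff_le X tX _]
  exact hle

end SubmetrizableAux

/-- If `X` is submetrizable, `Y` is functionally Hausdorff, dense-in-itself, every point of `Y`
lies in a subspace in which it is a non-isolated q-point, and `f : X → Y` is an open-closed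
continuous surjection, then `Y` is submetrizable. -/
theorem submetrizable_of_openClosed_image_qpoints {X : Type u} {Y : Type v}
    [TopologicalSpace X] [TopologicalSpace Y] [T1Space X] [T1Space Y]
    (hX : Submetrizable X) (hY : FunctionallyHausdorff Y)
    (hdense : ∀ y : Y, (nhdsWithin y {y}ᶜ).NeBot)
    (hq : ∀ y : Y, ∃ (Q : Set Y) (hy : y ∈ Q),
      (nhdsWithin (⟨y, hy⟩ : Q) ({(⟨y, hy⟩ : Q)}ᶜ)).NeBot ∧ IsQPoint (⟨y, hy⟩ : Q))
    (f : X → Y) (hf : Continuous f) (hsurj : Function.Surjective f)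
    (hopen : IsOpenMap f) (hclosed : IsClosedMap f) :
    Submetrizable Y := by
  exact SubmetrizableAux.key' hX hY hq f hf hsurj hopen hclosed
end

section
/- Let f : X → Y be a closed continuous surjection from a submetrizable space X, let τ be a coarser metrizable topology on X with a σ-discrete base ⋃ₙ 𝔘ₙ, and suppose Y is countably compact. Then for every n, the family {f[U] : U ∈ 𝔘ₙ} is finite, and {f[U] : U ∈ ⋃ₙ 𝔘ₙ} is a countable almost network for Y. -/
universe u v

/-- `Y` is countably compact: every countable open cover has a finite subcover. -/
def CountablyCompactSpace' (Y : Type v) [TopologicalSpace Y] : Prop :=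
  ∀ U : ℕ → Set Y, (∀ n, IsOpen (U n)) → (⋃ n, U n) = Set.univ →
    ∃ s : Finset ℕ, (⋃ n ∈ s, U n) = Set.univ

/-- `N` is an almost network for `Y`. -/
def AlmostNetwork {Y : Type v} [TopologicalSpace Y] (N : Set (Set Y)) : Prop :=
  ∀ y : Y, ∀ V : Set Y, IsOpen V → y ∈ V → ∃ F ∈ N, y ∈ F ∧ (F \ V).Finite

/-- A family is discrete (w.r.t. a topology `τ`) if every point has a `τ`-neighbourhood
meeting at most one member. -/
def DiscreteFamily {X : Type u} (τ : TopologicalSpace X) (𝔇 : Set (Set X)) : Prop :=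
  ∀ x : X, ∃ V ∈ @nhds X τ x, {D ∈ 𝔇 | (D ∩ V).Nonempty}.Subsingleton

/-- Generic recursive selection: if at each stage we can always pick an element of `T k`
related (by `R`) to all previously chosen elements, then there is a sequence `y` with
`y k ∈ T k` and `R (y k) (y j)` for all `j < k`. -/
lemma exists_seq_rel {α : Type*} (R : α → α → Prop) (T : ℕ → Set α)
    (h : ∀ (k : ℕ) (l : List α), ∃ a ∈ T k, ∀ b ∈ l, R a b) :
    ∃ y : ℕ → α, (∀ k, y k ∈ T k) ∧ ∀ j k, j < k → R (y k) (y j) := by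
  choose step h1 h2 using h
  let L : ℕ → List α := fun k => Nat.rec [] (fun k ih => step k ih :: ih) k
  have hL : ∀ k, L (k + 1) = step k (L k) :: L k := fun k => rfl
  refine ⟨fun k => step k (L k), fun k => h1 k (L k), ?_⟩
  have hmem : ∀ j m, j < m → step j (L j) ∈ L m := by
    intro j m
    induction m with
    | zero => intro hc; exact absurd hc (Nat.not_lt_zero j)
    | succ m ih =>
      intro hm
      rw [hL]
      rcases Nat.lt_succ_iff_lt_or_eq.mp hm with h' | h'
      · exact List.mem_cons_of_mem _ (ih h')
      · subst h'; exact List.mem_cons_self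
  intro j k hjk
  exact h2 k (L k) _ (hmem j k hjk)

/-- A countably compact space cannot contain a sequence `y` avoiding an open set `V`
together with closed sets `Cₙ ⊇ {yᵢ : i ≥ n}` whose intersection lies in `V`. -/
lemma cc_contradiction {Y : Type v} [TopologicalSpace Y] (hY : CountablyCompactSpace' Y)
    (V : Set Y) (hV : IsOpen V) (y : ℕ → Y) (hyV : ∀ i, y i ∉ V)
    (C : ℕ → Set Y) (hC : ∀ n, IsClosed (C n))
    (hmem : ∀ n i, n ≤ i → y i ∈ C n)
    (hinter : ∀ z, (∀ n, z ∈ C n) → z ∈ V) : False := by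
  classical
  obtain ⟨s, hs⟩ := hY (fun n => Nat.casesOn n V fun m => (C m)ᶜ)
    (by
      intro n
      cases n with
      | zero => exact hV
      | succ m => exact (hC m).isOpen_compl)
    (by
      ext z
      simp only [Set.mem_iUnion, Set.mem_univ, iff_true]
      by_cases hz : ∀ n, z ∈ C n
      · exact ⟨0, hinter z hz⟩
      · push_neg at hz
        obtain ⟨n, hn⟩ := hz
        exact ⟨n + 1, hn⟩)
  set m := s.sup id with hm
  have hym : y m ∈ ⋃ n ∈ s, (fun n => Nat.casesOn n V fun m => (C m)ᶜ) n := by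
    rw [hs]; trivial
  simp only [Set.mem_iUnion] at hym
  obtain ⟨n, hns, hyn⟩ := hym
  cases n with
  | zero => exact hyV m hyn
  | succ k =>
    have hk : k + 1 ≤ m := Finset.le_sup (f := id) hns
    exact hyn (hmem k m (by omega))

/-- In a T₁ space, a set is closed provided every point outside it has a neighbourhood
meeting it in a finite set. -/
lemma isClosed_of_nhds_finite {X : Type*} [TopologicalSpace X] [T1Space X] {A : Set X}
    (h : ∀ z ∉ A, ∃ V ∈ nhds z, (A ∩ V).Finite) : IsClosed A := by
  rw [← isOpen_compl_iff, isOpen_iff_mem_nhds]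
  intro z hz
  obtain ⟨V, hV, hfin⟩ := h z hz
  have h1 : (A ∩ V)ᶜ ∈ nhds z :=
    hfin.isClosed.isOpen_compl.mem_nhds (fun hmem => hz hmem.1)
  filter_upwards [hV, h1] with w hw1 hw2
  intro hwA
  exact hw2 ⟨hwA, hw1⟩

/-- Any subset of a transversal of an injectively indexed discrete family is closed. -/
lemma closed_of_discrete {X : Type*} [t : TopologicalSpace X] [T1Space X]
    {𝔇 : Set (Set X)} (hd : DiscreteFamily t 𝔇)
    {U : ℕ → Set X} (hU : ∀ k, U k ∈ 𝔇) (hUinj : Function.Injective U)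
    {x : ℕ → X} (hx : ∀ k, x k ∈ U k) (A : Set X) (hA : A ⊆ Set.range x) :
    IsClosed A := by
  apply isClosed_of_nhds_finite
  intro z hz
  obtain ⟨V, hV, hsub⟩ := hd z
  refine ⟨V, hV, Set.Subsingleton.finite ?_⟩
  intro a ha b hb
  obtain ⟨j, rfl⟩ := hA ha.1
  obtain ⟨k, rfl⟩ := hA hb.1
  have hj : U j ∈ {D ∈ 𝔇 | (D ∩ V).Nonempty} := ⟨hU j, ⟨x j, hx j, ha.2⟩⟩
  have hk : U k ∈ {D ∈ 𝔇 | (D ∩ V).Nonempty} := ⟨hU k, ⟨x k, hx k, hb.2⟩⟩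
  rw [hUinj (hsub hj hk)]

/-- The range (tail) of a convergent sequence together with its limit is closed in a
Hausdorff space. -/
lemma closed_of_tendsto {X : Type*} [TopologicalSpace X] [T2Space X]
    {x : ℕ → X} {p : X} (hx : Filter.Tendsto x Filter.atTop (nhds p)) (m : ℕ) :
    IsClosed ({p} ∪ {z | ∃ k, m ≤ k ∧ z = x k}) := by
  apply isClosed_of_nhds_finite
  intro z hz
  have hzp : z ≠ p := fun h => hz (Or.inl (by simp [h]))
  obtain ⟨W, O, hWopen, hOopen, hzW, hpO, hWO⟩ := t2_separation hzp
  obtain ⟨k₀, hk₀⟩ := (Filter.tendsto_atTop'.mp hx) O (hOopen.mem_nhds hpO)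
  refine ⟨W, hWopen.mem_nhds hzW, ?_⟩
  refine ((Set.finite_Iio k₀).image x).subset ?_
  rintro w ⟨hw1, hw2⟩
  rcases hw1 with hw1 | ⟨k, hk, rfl⟩
  · exact absurd ((show w = p from hw1) ▸ hpO) (Set.disjoint_left.mp hWO hw2)
  · by_cases hkk : k < k₀
    · exact ⟨k, hkk, rfl⟩
    · exact absurd (hk₀ k (le_of_not_gt hkk)) (Set.disjoint_left.mp hWO hw2)

/-- If `f : X → Y` is a closed continuous surjection from a submetrizable space, `τ` a coarser
metrizable topology on `X` with a σ-discrete base `⋃ n, 𝔘 n`, and `Y` is countably compact,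
then each image family `{f[U] : U ∈ 𝔘 n}` is finite and the whole image family is a
countable almost network for `Y`. -/
theorem image_of_sigma_discrete_base_almostNetwork {X : Type u} {Y : Type v}
    [tX : TopologicalSpace X] [TopologicalSpace Y] [T1Space X] [T1Space Y]
    (f : X → Y) (hf : Continuous f) (hsurj : Function.Surjective f)
    (hclosed : IsClosedMap f)
    (τ : TopologicalSpace X) (hτ : tX ≤ τ) (hmetr : @TopologicalSpace.MetrizableSpace X τ)
    (𝔘 : ℕ → Set (Set X))
    (hdisc : ∀ n, DiscreteFamily τ (𝔘 n))
    (hbase : @TopologicalSpace.IsTopologicalBasis X τ (⋃ n, 𝔘 n))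
    (hY : CountablyCompactSpace' Y) :
    (∀ n, {S : Set Y | ∃ U ∈ 𝔘 n, S = f '' U}.Finite) ∧
    {S : Set Y | ∃ U ∈ ⋃ n, 𝔘 n, S = f '' U}.Countable ∧
    AlmostNetwork {S : Set Y | ∃ U ∈ ⋃ n, 𝔘 n, S = f '' U} := by
  classical
  have ht2τ : @T2Space X τ := @TopologicalSpace.t2Space_of_metrizableSpace X τ hmetr
  have ht1τ : @T1Space X τ := @T2Space.t1Space X τ ht2τ
  -- Part 1: each image family is finite.
  have key : ∀ n, {S : Set Y | ∃ U ∈ 𝔘 n, S = f '' U}.Finite := by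
    intro n
    by_contra hinf
    have hinf : {S : Set Y | ∃ U ∈ 𝔘 n, S = f '' U}.Infinite := hinf
    -- select pairwise distinct sets with pairwise distinct representatives
    have hstep : ∀ (k : ℕ) (l : List (Set Y × Y)),
        ∃ a ∈ {q : Set Y × Y | q.1 ∈ {S : Set Y | ∃ U ∈ 𝔘 n, S = f '' U} ∧ q.2 ∈ q.1},
          ∀ b ∈ l, a.1 ≠ b.1 ∧ a.2 ≠ b.2 := by
      intro k l
      have hbad : ((Prod.fst '' {b | b ∈ l}) ∪
          {S : Set Y | S ⊆ Prod.snd '' {b | b ∈ l}}).Finite :=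
        ((l.finite_toSet.image _).union (l.finite_toSet.image _).finite_subsets)
      obtain ⟨S, hS⟩ := (hinf.diff hbad).nonempty
      have hS1 : S ∈ {S : Set Y | ∃ U ∈ 𝔘 n, S = f '' U} := hS.1
      have hS2 : S ∉ Prod.fst '' {b | b ∈ l} := fun h => hS.2 (Or.inl h)
      have hS3 : ¬ S ⊆ Prod.snd '' {b | b ∈ l} := fun h => hS.2 (Or.inr h)
      obtain ⟨a, haS, ha⟩ := Set.not_subset.mp hS3
      refine ⟨(S, a), ⟨hS1, haS⟩, ?_⟩
      intro b hb
      constructor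
      · intro h; exact hS2 ⟨b, hb, h.symm⟩
      · intro h; exact ha ⟨b, hb, h.symm⟩
    obtain ⟨p, hpT, hpR⟩ := exists_seq_rel _ _ hstep
    set S : ℕ → Set Y := fun k => (p k).1 with hSdef
    set y : ℕ → Y := fun k => (p k).2 with hydef
    have hySk : ∀ k, y k ∈ S k := fun k => (hpT k).2
    choose U hU hSU using fun k => (hpT k).1
    have hSinj : Function.Injective S := by
      intro j k h
      rcases lt_trichotomy j k with hlt | he | hlt
      · exact absurd h.symm (hpR j k hlt).1
      · exact he
      · exact absurd h (hpR k j hlt).1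
    have hyinj : Function.Injective y := by
      intro j k h
      rcases lt_trichotomy j k with hlt | he | hlt
      · exact absurd h.symm (hpR j k hlt).2
      · exact he
      · exact absurd h (hpR k j hlt).2
    have hUinj : Function.Injective U := by
      intro j k h
      apply hSinj
      show (p j).1 = (p k).1
      rw [hSU j, hSU k, h]
    have hyS : ∀ k, y k ∈ f '' U k := fun k => (hSU k) ▸ hySk k
    choose x hxU hfx using hyS
    -- every tail of `x` is τ-closed, hence tX-closed, hence its image is closed
    have hC : ∀ m, IsClosed (f '' {z | ∃ k, m ≤ k ∧ z = x k}) := by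
      intro m
      apply hclosed
      refine IsClosed.mono ?_ hτ
      exact @closed_of_discrete X τ ht1τ _ (hdisc n) _ hU hUinj _ hxU _
        (by rintro z ⟨k, _, rfl⟩; exact ⟨k, rfl⟩)
    refine cc_contradiction hY ∅ isOpen_empty y (fun i => Set.notMem_empty _)
      (fun m => f '' {z | ∃ k, m ≤ k ∧ z = x k}) hC ?_ ?_
    · intro m i hmi
      exact ⟨x i, ⟨i, hmi, rfl⟩, hfx i⟩
    · intro z hz
      exfalso
      obtain ⟨w, ⟨k, -, rfl⟩, hw⟩ := hz 0
      obtain ⟨w', ⟨j, hj, rfl⟩, hw'⟩ := hz (k + 1)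
      have : y j = y k := by rw [← hfx j, ← hfx k, hw', hw]
      have := hyinj this
      omega
  -- Part 2: countability.
  have hcount : {S : Set Y | ∃ U ∈ ⋃ n, 𝔘 n, S = f '' U}.Countable := by
    have heq : {S : Set Y | ∃ U ∈ ⋃ n, 𝔘 n, S = f '' U} =
        ⋃ n, {S : Set Y | ∃ U ∈ 𝔘 n, S = f '' U} := by
      ext S
      simp only [Set.mem_iUnion, Set.mem_setOf_eq]
      constructor
      · rintro ⟨U, hU, rfl⟩
        obtain ⟨n, hn⟩ := hU
        exact ⟨n, U, hn, rfl⟩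
      · rintro ⟨n, U, hn, rfl⟩
        exact ⟨U, ⟨n, hn⟩, rfl⟩
    rw [heq]
    exact Set.countable_iUnion fun n => (key n).countable
  refine ⟨key, hcount, ?_⟩
  -- Part 3: almost network.
  intro y0 V hV hy0
  by_contra hcon
  push_neg at hcon
  obtain ⟨x0, hx0⟩ := hsurj y0
  have hcg : (@nhds X τ x0).IsCountablyGenerated :=
    @FirstCountableTopology.nhds_generated_countable X τ
      (@TopologicalSpace.PseudoMetrizableSpace.firstCountableTopology X τ
        (@TopologicalSpace.MetrizableSpace.toPseudoMetrizableSpace X τ hmetr)) x0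
  obtain ⟨b, hb⟩ := @Filter.exists_antitone_basis _ (@nhds X τ x0) hcg
  have hbk : ∀ k, ∃ U ∈ ⋃ n, 𝔘 n, x0 ∈ U ∧ U ⊆ b k := by
    intro k
    exact (@TopologicalSpace.IsTopologicalBasis.mem_nhds_iff X τ _ _ _ hbase).mp
      (hb.toHasBasis.mem_of_mem trivial)
  choose U hUmem hx0U hUb using hbk
  have hUinf : ∀ k, (f '' U k \ V).Infinite := by
    intro k
    have hyk : y0 ∈ f '' U k := ⟨x0, hx0U k, hx0⟩
    exact hcon (f '' U k) ⟨U k, hUmem k, rfl⟩ hyk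
  have hstep : ∀ (k : ℕ) (l : List Y), ∃ a ∈ f '' U k \ V, ∀ b ∈ l, a ≠ b := by
    intro k l
    obtain ⟨a, ha⟩ := ((hUinf k).diff l.finite_toSet).nonempty
    exact ⟨a, ha.1, fun b hb hab => ha.2 (hab ▸ hb)⟩
  obtain ⟨y, hyT, hyR⟩ := exists_seq_rel _ _ hstep
  have hyV : ∀ i, y i ∉ V := fun i => (hyT i).2
  have hyinj : Function.Injective y := by
    intro j k h
    rcases lt_trichotomy j k with hlt | he | hlt
    · exact absurd h.symm (hyR j k hlt)
    · exact he
    · exact absurd h (hyR k j hlt)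
  choose x hxU hfx using fun k => (hyT k).1
  have htend : Filter.Tendsto x Filter.atTop (@nhds X τ x0) :=
    hb.tendsto fun k => hUb k (hxU k)
  have hC : ∀ m, IsClosed (f '' ({x0} ∪ {z | ∃ k, m ≤ k ∧ z = x k})) := by
    intro m
    apply hclosed
    exact IsClosed.mono (@closed_of_tendsto X τ ht2τ _ _ htend m) hτ
  refine cc_contradiction hY V hV y hyV
    (fun m => f '' ({x0} ∪ {z | ∃ k, m ≤ k ∧ z = x k})) hC ?_ ?_
  · intro m i hmi
    exact ⟨x i, Or.inr ⟨i, hmi, rfl⟩, hfx i⟩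
  · intro z hz
    obtain ⟨w, hw0, hw⟩ := hz 0
    rcases hw0 with hw0 | ⟨k, -, rfl⟩
    · rw [← hw, show w = x0 from hw0, hx0]; exact hy0
    · obtain ⟨w', hw'0, hw'⟩ := hz (k + 1)
      rcases hw'0 with hw'0 | ⟨j, hj, rfl⟩
      · rw [← hw', show w' = x0 from hw'0, hx0] at hw ⊢
        rw [← hw] at hy0
        rw [hfx k] at hy0
        exact absurd hy0 (hyV k)
      · exfalso
        have : y j = y k := by rw [← hfx j, ← hfx k, hw', hw]
        have := hyinj this
        omega
end
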